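/- In the Robust Bilevel Selection Problem with discrete uncertainty set U, if the leader chooses a feasible solution X ⊆ E_l with |X| ≤ b, then the adversary's worst case can be computed by enumeration: max_{d∈U} c(X ∪ Y^d(X)) where Y^d(X) is the set of the b − |X| smallest items of E_f \ X with respect to d (fixed tie-breaking). Formally, for every X the maximum over the finite set U is attained, and the value of the robust leader's problem equals min over feasible X of this finite maximum; in particular, with E_l ∩ E_f = ∅, this min–max equals min over b_l ∈ {max(0,b−|E_f|),…,min(b,|E_l|)} of [g_l(b_l) + max_{d∈U} h_d(b − b_l)], where g_l(k) is the sum of the k smallest c-values in E_l and h_d(m) is the sum of leader costs c of the m smallest items of E_f under d. -/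

import Mathlib

/-- Follower's greedy response under scenario `d`: the `b − |X|` smallest items
of `E_f \ X` with respect to `d` (scenarios injective on `E_f`, fixed
tie-breaking). -/
def FollowerResp {α : Type*} [DecidableEq α] (Ef : Finset α) (b : ℕ) (d : α → ℚ)
    (X Y : Finset α) : Prop :=
  Y ⊆ Ef \ X ∧ Y.card = b - X.card ∧ ∀ e ∈ Y, ∀ e' ∈ (Ef \ X) \ Y, d e < d e'

private lemma prefix_sum_le (n : ℕ) (f : ℕ → ℚ)
    (hmono : ∀ i j : ℕ, 1 ≤ i → i ≤ j → j ≤ n → f i ≤ f j) :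
    ∀ (k : ℕ) (S : Finset ℕ), S ⊆ Finset.Icc 1 n → S.card = k →
      ∑ i ∈ Finset.Icc 1 k, f i ≤ ∑ i ∈ S, f i := by
  intro k
  induction k with
  | zero =>
    intro S _ hcard
    rw [Finset.card_eq_zero.mp hcard]
    simp
  | succ k ih =>
    intro S hsub hcard
    have hne : S.Nonempty := Finset.card_pos.mp (by omega)
    set m := S.max' hne with hm
    have hmS : m ∈ S := S.max'_mem hne
    have hmIcc : m ∈ Finset.Icc 1 n := hsub hmS
    have hm1 : 1 ≤ m := (Finset.mem_Icc.mp hmIcc).1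
    have hmn : m ≤ n := (Finset.mem_Icc.mp hmIcc).2
    have hSm : S ⊆ Finset.Icc 1 m := by
      intro x hx
      exact Finset.mem_Icc.mpr ⟨(Finset.mem_Icc.mp (hsub hx)).1, S.le_max' x hx⟩
    have hkm : k + 1 ≤ m := by
      have := Finset.card_le_card hSm
      rw [hcard, Nat.card_Icc] at this
      omega
    have herase : (S.erase m).card = k := by
      rw [Finset.card_erase_of_mem hmS, hcard]
      omega
    have hsub' : S.erase m ⊆ Finset.Icc 1 n :=
      (Finset.erase_subset _ _).trans hsub
    have := ih (S.erase m) hsub' herase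
    rw [Finset.sum_Icc_succ_top (by omega) f, ← Finset.sum_erase_add S f hmS]
    exact add_le_add this (hmono (k + 1) m (by omega) hkm hmn)

private lemma const_add_sup' {β : Type*} (s : Finset β) (h : s.Nonempty)
    (a : ℚ) (f : β → ℚ) :
    s.sup' h (fun x => a + f x) = a + s.sup' h f := by
  apply le_antisymm
  · exact Finset.sup'_le _ _ fun x hx => add_le_add_right (Finset.le_sup' f hx) a
  · obtain ⟨x, hx, hfx⟩ := Finset.exists_mem_eq_sup' h f
    rw [hfx]
    exact Finset.le_sup' (fun x => a + f x) hx

private lemma resp_unique {α : Type*} [DecidableEq α] (Ef : Finset α) (b : ℕ)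
    (d : α → ℚ) (X Y : Finset α) (hXEf : Ef \ X = Ef)
    (q : ℕ → α) (hqinj : Set.InjOn q (Finset.Icc 1 Ef.card))
    (hqimg : (Finset.Icc 1 Ef.card).image q = Ef)
    (hqsort : ∀ i j : ℕ, 1 ≤ i → i ≤ j → j ≤ Ef.card → d (q i) ≤ d (q j))
    (hresp : FollowerResp Ef b d X Y) (hble : b - X.card ≤ Ef.card) :
    Y = (Finset.Icc 1 (b - X.card)).image q := by
  classical
  obtain ⟨hY1, hY2, hY3⟩ := hresp
  rw [hXEf] at hY1 hY3
  set t := b - X.card with ht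
  set Y' := (Finset.Icc 1 t).image q with hY'
  have hIccsub : Finset.Icc 1 t ⊆ Finset.Icc 1 Ef.card :=
    Finset.Icc_subset_Icc_right hble
  have hY'card : Y'.card = t := by
    rw [hY', Finset.card_image_of_injOn (hqinj.mono (Finset.coe_subset.mpr hIccsub)),
      Nat.card_Icc]
    omega
  have hY'sub : Y' ⊆ Ef := by
    rw [hY', ← hqimg]
    exact Finset.image_subset_image hIccsub
  by_contra hne
  have h1 : (Y \ Y').Nonempty := by
    rw [Finset.sdiff_nonempty]
    intro hsubYY
    exact hne (Finset.eq_of_subset_of_card_le hsubYY (by omega))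
  have h2 : (Y' \ Y).Nonempty := by
    rw [Finset.sdiff_nonempty]
    intro hsubYY
    exact hne (Finset.eq_of_subset_of_card_le hsubYY (by omega)).symm
  obtain ⟨y, hy⟩ := h1
  obtain ⟨e, he⟩ := h2
  rw [Finset.mem_sdiff] at hy he
  obtain ⟨i, hi, rfl⟩ := Finset.mem_image.mp he.1
  have hyEf : y ∈ Ef := hY1 hy.1
  rw [← hqimg] at hyEf
  obtain ⟨j, hj, rfl⟩ := Finset.mem_image.mp hyEf
  have hjt : ¬ j ∈ Finset.Icc 1 t := by
    intro hjmem
    exact hy.2 (Finset.mem_image.mpr ⟨j, hjmem, rfl⟩)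
  rw [Finset.mem_Icc] at hi hj hjt
  have hij : d (q i) ≤ d (q j) := hqsort i j (by omega) (by omega) (by omega)
  have : d (q j) < d (q i) := by
    apply hY3 (q j) hy.1 (q i) (Finset.mem_sdiff.mpr ⟨hY'sub he.1, he.2⟩)
  linarith

private lemma subset_sum_ge {α : Type*} [DecidableEq α] (El : Finset α)
    (c : α → ℚ) (pl : ℕ → α)
    (hplinj : Set.InjOn pl (Finset.Icc 1 El.card))
    (hplimg : (Finset.Icc 1 El.card).image pl = El)
    (hplsort : ∀ i j : ℕ, 1 ≤ i → i ≤ j → j ≤ El.card → c (pl i) ≤ c (pl j))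
    (X : Finset α) (hX : X ⊆ El) :
    ∑ i ∈ Finset.Icc 1 X.card, c (pl i) ≤ ∑ e ∈ X, c e := by
  classical
  set S := (Finset.Icc 1 El.card).filter (fun i => pl i ∈ X) with hS
  have hSsub : S ⊆ Finset.Icc 1 El.card := Finset.filter_subset _ _
  have hinjS : Set.InjOn pl S := hplinj.mono (Finset.coe_subset.mpr hSsub)
  have himg : S.image pl = X := by
    apply Finset.Subset.antisymm
    · intro x hx
      obtain ⟨i, hi, rfl⟩ := Finset.mem_image.mp hx
      exact (Finset.mem_filter.mp hi).2
    · intro x hx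
      have hxE : x ∈ El := hX hx
      rw [← hplimg] at hxE
      obtain ⟨i, hi, rfl⟩ := Finset.mem_image.mp hxE
      exact Finset.mem_image.mpr ⟨i, Finset.mem_filter.mpr ⟨hi, hx⟩, rfl⟩
    
  have hcard : S.card = X.card := by
    rw [← himg, Finset.card_image_of_injOn hinjS]
  rw [← himg, Finset.sum_image (fun i hi j hj h => hinjS hi hj h),
    Finset.card_image_of_injOn hinjS]
  exact prefix_sum_le El.card (fun i => c (pl i)) hplsort S.card S hSsub rfl

/-- Robust Bilevel Selection with a discrete uncertainty set `U`: for every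
feasible leader's solution `X` the adversary's worst case is attained by
enumeration of the finitely many scenarios, and, with disjoint item sets,
the min–max value of the robust leader's problem equals the minimum over
`b_l ∈ {max(0, b − |E_f|), …, min(b, |E_l|)}` of
`g_l(b_l) + max_{d ∈ U} h_d(b − b_l)`, where `g_l(k)` is the sum of the `k`
smallest `c`-values in `E_l` and `h_d(m)` is the sum of leader costs of the
`m` smallest items of `E_f` under `d`. -/
theorem robust_disjoint_minmax_decomposition {α : Type*} [DecidableEq α]
    (El Ef : Finset α) (hdisj : Disjoint El Ef)
    (b : ℕ) (hb : b ≤ El.card + Ef.card)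
    (c : α → ℚ)
    (U : Finset (α → ℚ)) (hU : U.Nonempty)
    (hUinj : ∀ d ∈ U, Set.InjOn d Ef)
    -- the follower's (unique) greedy responses, as a function
    (R : (α → ℚ) → Finset α → Finset α)
    (hR : ∀ d ∈ U, ∀ X : Finset α, X ⊆ El → X.card ≤ b → b ≤ X.card + Ef.card →
      FollowerResp Ef b d X (R d X))
    -- a sorted enumeration of E_l by leader cost c
    (pl : ℕ → α)
    (hplinj : Set.InjOn pl (Finset.Icc 1 El.card))
    (hplimg : (Finset.Icc 1 El.card).image pl = El)
    (hplsort : ∀ i j : ℕ, 1 ≤ i → i ≤ j → j ≤ El.card → c (pl i) ≤ c (pl j))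
    -- for each scenario, a sorted enumeration of E_f by follower cost d
    (q : (α → ℚ) → ℕ → α)
    (hq : ∀ d ∈ U, Set.InjOn (q d) (Finset.Icc 1 Ef.card) ∧
      (Finset.Icc 1 Ef.card).image (q d) = Ef ∧
      ∀ i j : ℕ, 1 ≤ i → i ≤ j → j ≤ Ef.card → d (q d i) ≤ d (q d j)) :
    (∀ X : Finset α, X ⊆ El → X.card ≤ b → b ≤ X.card + Ef.card →
      ∃ d ∈ U,
        (∑ e ∈ X ∪ R d X, c e =
          U.sup' hU fun d' => ∑ e ∈ X ∪ R d' X, c e) ∧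
        ∀ d' ∈ U, ∑ e ∈ X ∪ R d' X, c e ≤ ∑ e ∈ X ∪ R d X, c e) ∧
    IsLeast
      {v : ℚ | ∃ X : Finset α, X ⊆ El ∧ X.card ≤ b ∧ b ≤ X.card + Ef.card ∧
        v = U.sup' hU fun d => ∑ e ∈ X ∪ R d X, c e}
      ((Finset.Icc (b - Ef.card) (min b El.card)).inf'
        (Finset.nonempty_Icc.mpr (by omega))
        fun k => (∑ i ∈ Finset.Icc 1 k, c (pl i)) +
          U.sup' hU fun d => ∑ i ∈ Finset.Icc 1 (b - k), c (q d i)) := by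
  classical
  have hEfX : ∀ X : Finset α, X ⊆ El → Ef \ X = Ef := by
    intro X hX
    exact Finset.sdiff_eq_self_iff_disjoint.mpr (hdisj.symm.mono_right hX)
  have hRX : ∀ d ∈ U, ∀ X : Finset α, X ⊆ El → X.card ≤ b → b ≤ X.card + Ef.card →
      R d X = (Finset.Icc 1 (b - X.card)).image (q d) := by
    intro d hd X hX h1 h2
    obtain ⟨hqinj, hqimg, hqsort⟩ := hq d hd
    exact resp_unique Ef b d X (R d X) (hEfX X hX) (q d) hqinj hqimg hqsort
      (hR d hd X hX h1 h2) (by omega)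
  have hsum : ∀ d ∈ U, ∀ X : Finset α, X ⊆ El → X.card ≤ b → b ≤ X.card + Ef.card →
      ∑ e ∈ X ∪ R d X, c e =
        (∑ e ∈ X, c e) + ∑ i ∈ Finset.Icc 1 (b - X.card), c (q d i) := by
    intro d hd X hX h1 h2
    obtain ⟨hqinj, hqimg, hqsort⟩ := hq d hd
    have hIccsub : Finset.Icc 1 (b - X.card) ⊆ Finset.Icc 1 Ef.card :=
      Finset.Icc_subset_Icc_right (by omega)
    have himgsub : (Finset.Icc 1 (b - X.card)).image (q d) ⊆ Ef := by
      rw [← hqimg]; exact Finset.image_subset_image hIccsub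
    rw [hRX d hd X hX h1 h2, Finset.sum_union (hdisj.mono hX himgsub)]
    congr 1
    exact Finset.sum_image fun i hi j hj h =>
      hqinj (hIccsub hi) (hIccsub hj) h
  have hF : ∀ X : Finset α, X ⊆ El → X.card ≤ b → b ≤ X.card + Ef.card →
      (U.sup' hU fun d => ∑ e ∈ X ∪ R d X, c e) =
      (∑ e ∈ X, c e) +
        U.sup' hU fun d => ∑ i ∈ Finset.Icc 1 (b - X.card), c (q d i) := by
    intro X hX h1 h2
    rw [← const_add_sup']
    exact Finset.sup'_congr hU rfl fun d hd => hsum d hd X hX h1 h2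
  constructor
  · intro X hX h1 h2
    obtain ⟨d, hd, hds⟩ :=
      Finset.exists_mem_eq_sup' hU (fun d' => ∑ e ∈ X ∪ R d' X, c e)
    refine ⟨d, hd, hds.symm, fun d' hd' => ?_⟩
    rw [← hds]
    exact Finset.le_sup' (fun d' => ∑ e ∈ X ∪ R d' X, c e) hd'
  constructor
  · -- membership
    obtain ⟨k, hk, hkeq⟩ := Finset.exists_mem_eq_inf'
      (Finset.nonempty_Icc.mpr (by omega : b - Ef.card ≤ min b El.card))
      (fun k => (∑ i ∈ Finset.Icc 1 k, c (pl i)) +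
        U.sup' hU fun d => ∑ i ∈ Finset.Icc 1 (b - k), c (q d i))
    rw [Finset.mem_Icc] at hk
    have hkb : k ≤ b := le_trans hk.2 (min_le_left _ _)
    have hkn : k ≤ El.card := le_trans hk.2 (min_le_right _ _)
    have hIccsub : Finset.Icc 1 k ⊆ Finset.Icc 1 El.card :=
      Finset.Icc_subset_Icc_right hkn
    set X₀ := (Finset.Icc 1 k).image pl with hX₀
    have hX₀sub : X₀ ⊆ El := by
      rw [hX₀, ← hplimg]; exact Finset.image_subset_image hIccsub
    have hX₀card : X₀.card = k := by
      rw [hX₀, Finset.card_image_of_injOn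
        (hplinj.mono (Finset.coe_subset.mpr hIccsub)), Nat.card_Icc]
      omega
    have hX₀sum : ∑ e ∈ X₀, c e = ∑ i ∈ Finset.Icc 1 k, c (pl i) := by
      rw [hX₀]
      exact Finset.sum_image fun i hi j hj h =>
        hplinj (hIccsub hi) (hIccsub hj) h
    refine ⟨X₀, hX₀sub, by omega, by omega, ?_⟩
    rw [hF X₀ hX₀sub (by omega) (by omega), hX₀card, hX₀sum, hkeq]
  · rintro v ⟨X, hX, h1, h2, rfl⟩
    rw [hF X hX h1 h2]
    have hXcard : X.card ≤ El.card := Finset.card_le_card hX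
    have hkmem : X.card ∈ Finset.Icc (b - Ef.card) (min b El.card) :=
      Finset.mem_Icc.mpr ⟨by omega, by omega⟩
    refine le_trans (Finset.inf'_le _ hkmem) ?_
    exact add_le_add_left
      (subset_sum_ge El c pl hplinj hplimg hplsort X hX) _
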